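/- In the affine Lie algebra aff_2(ℝ) = gl_2(ℝ) ⋉ ℝ² (basis e1,e2,e3,e4,f1,f2 as in the paper), the subalgebra s_{2.13} = ⟨e2 − 3e4, e1 + f1⟩ is a two-dimensional Lie subalgebra: the bracket [e2 − 3e4, e1 + f1] = −(e1 + f1). Moreover, s_{2.13} is not conjugate to ⟨e2 − 3e4, e1⟩ under the inner automorphism group of aff_2(ℝ). -/

import Mathlib

open Matrix

/-- The semidirect-product bracket of `aff₂(ℝ) = gl₂(ℝ) ⋉ ℝ²`. -/
def aff2Bracket (p q : Matrix (Fin 2) (Fin 2) ℝ × (Fin 2 → ℝ)) :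
    Matrix (Fin 2) (Fin 2) ℝ × (Fin 2 → ℝ) :=
  (p.1 * q.1 - q.1 * p.1, p.1.mulVec q.2 - q.1.mulVec p.2)

/-- The adjoint action of the element `(g, w)` of `GL₂⁺(ℝ) ⋉ ℝ²` on `aff₂(ℝ)`. -/
noncomputable def aff2Ad (g : Matrix (Fin 2) (Fin 2) ℝ) (w : Fin 2 → ℝ)
    (p : Matrix (Fin 2) (Fin 2) ℝ × (Fin 2 → ℝ)) :
    Matrix (Fin 2) (Fin 2) ℝ × (Fin 2 → ℝ) :=
  (g * p.1 * g⁻¹, g.mulVec p.2 - (g * p.1 * g⁻¹).mulVec w)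

/-- `e2 - 3 e4 = diag(-1, -2)`. -/
noncomputable abbrev affA : Matrix (Fin 2) (Fin 2) ℝ := !![-1,0;0,-2]
noncomputable abbrev affE : Matrix (Fin 2) (Fin 2) ℝ := !![0,0;1,0]
noncomputable abbrev affv : Fin 2 → ℝ := ![1,0]

lemma aff2_key (a b c d : ℝ) :
    aff2Bracket (a • (affA, (0 : Fin 2 → ℝ)) + b • (affE, affv))
      (c • (affA, (0 : Fin 2 → ℝ)) + d • (affE, affv)) = (b*c - a*d) • (affE, affv) := by
  simp only [aff2Bracket, Prod.smul_mk, Prod.mk_add_mk, Prod.mk.injEq, smul_zero]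
  constructor
  · ext i j
    fin_cases i <;> fin_cases j <;>
      simp [Matrix.mul_apply, Fin.sum_univ_two] <;> ring
  · funext i
    fin_cases i <;>
      simp [Matrix.mulVec, dotProduct, Fin.sum_univ_two] <;> ring

lemma aff2_li : LinearIndependent ℝ ![(affA, (0 : Fin 2 → ℝ)), (affE, affv)] := by
  rw [LinearIndependent.pair_iff]
  intro s t h
  have h1 := congrFun (congrFun (congrArg Prod.fst h) 0) 0
  have h2 := congrFun (congrFun (congrArg Prod.fst h) 1) 0
  simp at h1 h2
  constructor <;> linarith

/-- in `aff₂(ℝ)`, `s₂.₁₃ = ⟨e2 - 3e4, e1 + f1⟩` is a two-dimensional Lie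
subalgebra with `[e2 - 3e4, e1 + f1] = -(e1 + f1)`, and it is not conjugate to
`⟨e2 - 3e4, e1⟩` under the inner automorphism group of `aff₂(ℝ)`. -/
theorem s213_subalgebra_and_not_conjugate
    (e1 e2 e4 : Matrix (Fin 2) (Fin 2) ℝ) (f1 : Fin 2 → ℝ)
    (he1 : e1 = !![0, 0; 1, 0]) (he2 : e2 = !![1/2, 0; 0, -1/2])
    (he4 : e4 = !![1/2, 0; 0, 1/2]) (hf1 : f1 = ![1, 0]) :
    aff2Bracket (e2 - (3 : ℝ) • e4, 0) (e1, f1) = -(e1, f1) ∧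
    (∀ p ∈ Submodule.span ℝ ({(e2 - (3 : ℝ) • e4, 0), (e1, f1)} :
        Set (Matrix (Fin 2) (Fin 2) ℝ × (Fin 2 → ℝ))),
      ∀ q ∈ Submodule.span ℝ ({(e2 - (3 : ℝ) • e4, 0), (e1, f1)} :
        Set (Matrix (Fin 2) (Fin 2) ℝ × (Fin 2 → ℝ))),
        aff2Bracket p q ∈ Submodule.span ℝ ({(e2 - (3 : ℝ) • e4, 0), (e1, f1)} :
          Set (Matrix (Fin 2) (Fin 2) ℝ × (Fin 2 → ℝ)))) ∧
    Module.finrank ℝ (Submodule.span ℝ ({(e2 - (3 : ℝ) • e4, 0), (e1, f1)} :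
        Set (Matrix (Fin 2) (Fin 2) ℝ × (Fin 2 → ℝ)))) = 2 ∧
    ¬ ∃ (g : Matrix (Fin 2) (Fin 2) ℝ) (w : Fin 2 → ℝ), 0 < g.det ∧
        aff2Ad g w '' (Submodule.span ℝ ({(e2 - (3 : ℝ) • e4, 0), (e1, f1)} :
            Set (Matrix (Fin 2) (Fin 2) ℝ × (Fin 2 → ℝ))) : Set _) =
          (Submodule.span ℝ ({(e2 - (3 : ℝ) • e4, 0), (e1, (0 : Fin 2 → ℝ))} :
            Set (Matrix (Fin 2) (Fin 2) ℝ × (Fin 2 → ℝ))) : Set _) := by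
  subst he1 he2 he4 hf1
  have hAeq : (!![1/2, 0; 0, -1/2] : Matrix (Fin 2) (Fin 2) ℝ) - (3 : ℝ) • !![1/2, 0; 0, 1/2]
      = affA := by
    ext i j; fin_cases i <;> fin_cases j <;> norm_num
  rw [hAeq]
  set X : Matrix (Fin 2) (Fin 2) ℝ × (Fin 2 → ℝ) := (affA, 0) with hX
  set Y : Matrix (Fin 2) (Fin 2) ℝ × (Fin 2 → ℝ) := (affE, affv) with hY
  refine ⟨?_, ?_, ?_, ?_⟩
  · -- the bracket relation
    show aff2Bracket (affA, 0) (affE, affv) = -(affE, affv)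
    simp only [aff2Bracket, Prod.neg_mk, Prod.mk.injEq]
    constructor
    · ext i j
      fin_cases i <;> fin_cases j <;>
        norm_num [Matrix.mul_apply, Fin.sum_univ_two]
    · funext i
      fin_cases i <;>
        norm_num [Matrix.mulVec, dotProduct, Fin.sum_univ_two]
  · -- closure under bracket
    intro p hp q hq
    rw [Submodule.mem_span_pair] at hp hq
    obtain ⟨a, b, rfl⟩ := hp
    obtain ⟨c, d, rfl⟩ := hq
    rw [aff2_key a b c d]
    exact Submodule.smul_mem _ _ (Submodule.subset_span (by simp [hY]))
  · -- finrank
    have hr : ({X, Y} : Set (Matrix (Fin 2) (Fin 2) ℝ × (Fin 2 → ℝ)))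
        = Set.range ![X, Y] := by
      ext z
      simp only [Set.mem_insert_iff, Set.mem_singleton_iff, Set.mem_range,
        Fin.exists_fin_two, Matrix.cons_val_zero, Matrix.cons_val_one, Matrix.head_cons]
      tauto
    rw [hr, finrank_span_eq_card aff2_li, Fintype.card_fin]
  · -- not conjugate
    rintro ⟨g, w, hg, him⟩
    have hgu : IsUnit g.det := isUnit_iff_ne_zero.mpr (ne_of_gt hg)
    have hgi : Function.Injective g.mulVec :=
      mulVec_injective_iff_isUnit.mpr ((isUnit_iff_isUnit_det g).mpr hgu)
    -- every element of the target has zero translational part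
    have hsnd : ∀ p ∈ Submodule.span ℝ ({(affA, (0 : Fin 2 → ℝ)),
        (affE, (0 : Fin 2 → ℝ))} : Set (Matrix (Fin 2) (Fin 2) ℝ × (Fin 2 → ℝ))),
        p.2 = 0 := by
      intro p hp
      rw [Submodule.mem_span_pair] at hp
      obtain ⟨a, b, rfl⟩ := hp
      simp
    have hXmem : X ∈ (Submodule.span ℝ ({X, Y} :
        Set (Matrix (Fin 2) (Fin 2) ℝ × (Fin 2 → ℝ))) : Set _) :=
      Submodule.subset_span (by simp)
    have hYmem : Y ∈ (Submodule.span ℝ ({X, Y} :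
        Set (Matrix (Fin 2) (Fin 2) ℝ × (Fin 2 → ℝ))) : Set _) :=
      Submodule.subset_span (by simp)
    have hXim := him ▸ Set.mem_image_of_mem (aff2Ad g w) hXmem
    have hYim := him ▸ Set.mem_image_of_mem (aff2Ad g w) hYmem
    have hX2 := hsnd _ hXim
    have hY2 := hsnd _ hYim
    -- from X's image: w = 0
    have h0 : g.det ≠ 0 := hg.ne'
    have hdet : (g * affA * g⁻¹).det = 2 := by
      rw [det_mul, det_mul, det_nonsing_inv, Ring.inverse_eq_inv']
      have hA2 : (affA).det = 2 := by norm_num [Matrix.det_fin_two_of]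
      rw [hA2, mul_comm g.det 2, mul_assoc, mul_inv_cancel₀ h0, mul_one]
    have hMu : IsUnit (g * affA * g⁻¹) := by
      rw [isUnit_iff_isUnit_det, hdet]
      exact isUnit_iff_ne_zero.mpr two_ne_zero
    have hw : w = 0 := by
      have h0 : (g * affA * g⁻¹).mulVec w = 0 := by
        have : g.mulVec X.2 - (g * affA * g⁻¹).mulVec w = 0 := hX2
        simp only [hX, Matrix.mulVec_zero, zero_sub, neg_eq_zero] at this
        exact this
      exact (mulVec_injective_iff_isUnit.mpr hMu) (by simpa using h0)
    -- from Y's image: g.mulVec affv = 0, contradiction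
    have hv : g.mulVec affv = 0 := by
      have : g.mulVec Y.2 - (g * affE * g⁻¹).mulVec w = 0 := hY2
      simpa [hY, hw] using this
    have : affv = 0 := hgi (by simpa using hv)
    have := congrFun this 0
    norm_num at this
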